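/- Let T : {1,2}×{1,2}×{1,2} → ℂ be a nonzero function (a 2×2×2 complex tensor). Then there exist x, y, z : {1,2} → ℂ with T(i,j,k) = x(i)·y(j)·z(k) for all i,j,k if and only if for all i,i',j,j',k,k' ∈ {1,2} the three families of 2×2 minor equations hold: T(i,j,k)T(i',j',k') = T(i',j,k)T(i,j',k'), T(i,j,k)T(i',j',k') = T(i,j',k)T(i',j,k'), and T(i,j,k)T(i',j',k') = T(i,j,k')T(i',j',k). -/

import Mathlib

/-- A nonzero 2×2×2 complex tensor is decomposable (`T i j k = x i * y j * z k`)
if and only if all 2×2 minors of its three flattenings vanish: the equations of the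
affine cone over the Segre embedding `ℙ¹×ℙ¹×ℙ¹ ↪ ℙ⁷`. -/
theorem segre_cone_tensor_decomposable
    (T : Fin 2 → Fin 2 → Fin 2 → ℂ) (hT : T ≠ 0) :
    (∃ x y z : Fin 2 → ℂ, ∀ i j k : Fin 2, T i j k = x i * y j * z k) ↔
    (∀ i i' j j' k k' : Fin 2,
      T i j k * T i' j' k' = T i' j k * T i j' k' ∧
      T i j k * T i' j' k' = T i j' k * T i' j k' ∧
      T i j k * T i' j' k' = T i j k' * T i' j' k) := by
  constructor
  · rintro ⟨x, y, z, h⟩ i i' j j' k k'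
    simp only [h]; refine ⟨by ring, by ring, by ring⟩
  · intro hmin
    have : ∃ a b c : Fin 2, T a b c ≠ 0 := by
      by_contra h
      push_neg at h
      exact hT (by funext a b c; exact h a b c)
    obtain ⟨a, b, c, habc⟩ := this
    refine ⟨fun i => T i b c, fun j => T a j c, fun k => T a b k / (T a b c * T a b c),
      fun i j k => ?_⟩
    have h1 : T a j c * T i b c = T a b c * T i j c := (hmin a i j b c c).2.1
    have h2 : T i j c * T a b k = T i j k * T a b c := (hmin i a j b c k).2.2
    field_simp
    calc T i j k * T a b c ^ 2 = (T i j c * T a b k) * T a b c := by rw [h2]; ring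
      _ = (T a j c * T i b c) * T a b k := by rw [h1]; ring
      _ = T i b c * (T a j c * T a b k) := by ring
      _ = T i b c * T a j c * T a b k := by ring
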